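/- Let R be a commutative ring, A ∈ R^{m×n} and B ∈ R^{n×m}. For every k ≥ 1, the coefficient of Z^k in the polynomial det(I_n + Z·(B·A)) ∈ R[Z] equals Σ_{α,β} det(B_{β,α})·det(A_{α,β}), where the sum runs over all strictly increasing maps α : Fin k → Fin m and β : Fin k → Fin n, A_{α,β} is the k×k submatrix of A on rows α and columns β, and B_{β,α} is the k×k submatrix of B on rows β and columns α. -/

import Mathlib

open Matrix Polynomial
open scoped Classical

section Aux

open Finset Equiv Equiv.Perm

variable {R : Type*} [CommRing R]

private lemma hcard_image {k m : ℕ} (f : Fin k → Fin m) (hf : Function.Injective f) :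
    (Finset.image f Finset.univ).card = k := by
  rw [Finset.card_image_of_injective _ hf, Finset.card_univ, Fintype.card_fin]

/-- The unique strictly monotone map with the same image as the injective map `f`. -/
private noncomputable def monoOf {k m : ℕ} (f : Fin k → Fin m) (hf : Function.Injective f) :
    Fin k → Fin m :=
  ⇑(Finset.orderEmbOfFin (Finset.image f Finset.univ) (hcard_image f hf))

private lemma monoOf_strictMono {k m : ℕ} (f : Fin k → Fin m) (hf : Function.Injective f) :
    StrictMono (monoOf f hf) :=
  (Finset.orderEmbOfFin _ _).strictMono

/-- The permutation `π` with `monoOf f ∘ π = f`. -/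
private noncomputable def permOf {k m : ℕ} (f : Fin k → Fin m) (hf : Function.Injective f) :
    Equiv.Perm (Fin k) :=
  Equiv.ofBijective
    (fun i => ((Finset.image f Finset.univ).orderIsoOfFin (hcard_image f hf)).symm ⟨f i, by simp⟩)
    (Finite.injective_iff_bijective.mp (fun a b hab => by
      have h := congrArg (fun x => ((((Finset.image f Finset.univ).orderIsoOfFin
        (hcard_image f hf)) x : Fin m))) hab
      simp only [OrderIso.apply_symm_apply] at h
      exact hf h))

private lemma permOf_apply {k m : ℕ} (f : Fin k → Fin m) (hf : Function.Injective f)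
    (i : Fin k) :
    permOf f hf i = ((Finset.image f Finset.univ).orderIsoOfFin (hcard_image f hf)).symm
      ⟨f i, Finset.mem_image_of_mem f (Finset.mem_univ i)⟩ :=
  rfl

private lemma monoOf_permOf {k m : ℕ} (f : Fin k → Fin m) (hf : Function.Injective f)
    (i : Fin k) : monoOf f hf (permOf f hf i) = f i := by
  have h2 : ((Finset.image f Finset.univ).orderIsoOfFin (hcard_image f hf)) (permOf f hf i)
      = ⟨f i, Finset.mem_image_of_mem f (Finset.mem_univ i)⟩ := by
    rw [permOf_apply]
    exact OrderIso.apply_symm_apply _ _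
  have h3 := congrArg Subtype.val h2
  rw [Finset.coe_orderIsoOfFin_apply] at h3
  exact h3

private lemma mono_perm_unique {k m : ℕ} {α : Fin k → Fin m} (hα : StrictMono α)
    (π : Equiv.Perm (Fin k)) (hf : Function.Injective (α ∘ π)) :
    monoOf (α ∘ π) hf = α ∧ permOf (α ∘ π) hf = π := by
  have hmem : ∀ x, α x ∈ Finset.image (α ∘ π) Finset.univ := by
    intro x
    simp only [Finset.mem_image, Finset.mem_univ, true_and, Function.comp_apply]
    exact ⟨π.symm x, by simp⟩
  have h1 : monoOf (α ∘ π) hf = α :=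
    (Finset.orderEmbOfFin_unique (hcard_image _ hf) hmem hα).symm
  refine ⟨h1, Equiv.ext fun i => ?_⟩
  apply hα.injective
  have := monoOf_permOf (α ∘ π) hf i
  rw [h1] at this
  exact this

/-- Expansion of `det (M * N)` over all column selections. -/
private lemma det_mul_expand {k m : ℕ} (M : Matrix (Fin k) (Fin m) R)
    (N : Matrix (Fin m) (Fin k) R) :
    det (M * N) = ∑ f : Fin k → Fin m, (∏ i, N (f i) i) * det (M.submatrix id f) := by
  rw [det_apply']
  calc ∑ σ : Equiv.Perm (Fin k), ((Equiv.Perm.sign σ : ℤ) : R) * ∏ i, (M * N) (σ i) i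
      = ∑ σ : Equiv.Perm (Fin k), ∑ f : Fin k → Fin m,
          ((Equiv.Perm.sign σ : ℤ) : R) * ∏ i, M (σ i) (f i) * N (f i) i := by
        simp only [Matrix.mul_apply, Finset.prod_univ_sum, Fintype.piFinset_univ,
          Finset.mul_sum]
    _ = ∑ f : Fin k → Fin m, ∑ σ : Equiv.Perm (Fin k),
          ((Equiv.Perm.sign σ : ℤ) : R) * ∏ i, M (σ i) (f i) * N (f i) i :=
        Finset.sum_comm
    _ = ∑ f : Fin k → Fin m, (∏ i, N (f i) i) * det (M.submatrix id f) := by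
        refine Finset.sum_congr rfl fun f _ => ?_
        rw [det_apply', Finset.mul_sum]
        refine Finset.sum_congr rfl fun σ _ => ?_
        simp only [Matrix.submatrix_apply, id_eq]
        rw [Finset.prod_mul_distrib]
        ring

private lemma det_submatrix_comp_perm {k m : ℕ} (M : Matrix (Fin k) (Fin m) R)
    (α : Fin k → Fin m) (π : Equiv.Perm (Fin k)) :
    det (M.submatrix id (α ∘ π)) = ((Equiv.Perm.sign π : ℤ) : R) * det (M.submatrix id α) := by
  have h : M.submatrix id (α ∘ π) = (M.submatrix id α).submatrix id π := by
    simp [Matrix.submatrix_submatrix]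
  rw [h, Matrix.det_permute']

/-- Cauchy–Binet. -/
private lemma cauchy_binet {k m : ℕ} (M : Matrix (Fin k) (Fin m) R)
    (N : Matrix (Fin m) (Fin k) R) :
    det (M * N) = ∑ α ∈ Finset.univ.filter (fun α : Fin k → Fin m => StrictMono α),
      det (M.submatrix id α) * det (N.submatrix α id) := by
  rw [det_mul_expand]
  rw [← Finset.sum_filter_add_sum_filter_not Finset.univ (fun f : Fin k → Fin m =>
    Function.Injective f)]
  have h0 : ∑ f ∈ Finset.univ.filter (fun f : Fin k → Fin m => ¬ Function.Injective f),
      (∏ i, N (f i) i) * det (M.submatrix id f) = 0 := by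
    refine Finset.sum_eq_zero fun f hf => ?_
    simp only [Finset.mem_filter] at hf
    obtain ⟨i, j, hij, hne⟩ := Function.not_injective_iff.mp hf.2
    have hd : det (M.submatrix id f) = 0 :=
      Matrix.det_zero_of_column_eq hne (fun x => by simp [Matrix.submatrix_apply, hij])
    rw [hd, mul_zero]
  rw [h0, add_zero]
  have hrhs : ∑ α ∈ Finset.univ.filter (fun α : Fin k → Fin m => StrictMono α),
      det (M.submatrix id α) * det (N.submatrix α id)
      = ∑ p ∈ (Finset.univ.filter (fun α : Fin k → Fin m => StrictMono α)) ×ˢ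
          (Finset.univ : Finset (Equiv.Perm (Fin k))),
          ((Equiv.Perm.sign p.2 : ℤ) : R) * (∏ i, N (p.1 (p.2 i)) i) *
            det (M.submatrix id p.1) := by
    rw [Finset.sum_product]
    refine Finset.sum_congr rfl fun α _ => ?_
    rw [det_apply' (N.submatrix α id), Finset.mul_sum]
    refine Finset.sum_congr rfl fun π _ => ?_
    simp only [Matrix.submatrix_apply, id_eq]
    ring
  rw [hrhs]
  symm
  refine Finset.sum_bij'
    (i := fun (p : (Fin k → Fin m) × Equiv.Perm (Fin k)) (_ : p ∈ _) => p.1 ∘ ⇑p.2)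
    (j := fun (f : Fin k → Fin m)
      (hf : f ∈ Finset.univ.filter (fun f : Fin k → Fin m => Function.Injective f)) =>
      (monoOf f ((Finset.mem_filter.mp hf).2), permOf f ((Finset.mem_filter.mp hf).2)))
    ?_ ?_ ?_ ?_ ?_
  · intro p hp
    simp only [Finset.mem_product, Finset.mem_filter, Finset.mem_univ, true_and,
      and_true] at hp ⊢
    exact hp.injective.comp p.2.injective
  · intro f hf
    simp only [Finset.mem_product, Finset.mem_filter, Finset.mem_univ, true_and, and_true]
    exact monoOf_strictMono f _
  · -- left_inv
    intro p hp
    simp only [Finset.mem_product, Finset.mem_filter, Finset.mem_univ, true_and,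
      and_true] at hp
    obtain ⟨h1, h2⟩ := mono_perm_unique hp p.2 (hp.injective.comp p.2.injective)
    exact Prod.ext h1 h2
  · -- right_inv
    intro f hf
    have hf' : Function.Injective f := (Finset.mem_filter.mp hf).2
    funext i
    exact monoOf_permOf f hf' i
  · -- values agree
    intro p hp
    rw [det_submatrix_comp_perm M p.1 p.2]
    have : ∀ i, (p.1 ∘ ⇑p.2) i = p.1 (p.2 i) := fun _ => rfl
    simp only [Function.comp_apply]
    ring

private lemma coeff_helper (a : R) (j kk : ℕ) (P : Prop) [Decidable P] :
    ((C a * X ^ j) * (if P then (1 : R[X]) else 0)).coeff kk =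
      if j = kk ∧ P then a else 0 := by
  by_cases hP : P
  · rw [if_pos hP, mul_one, coeff_C_mul, coeff_X_pow]
    by_cases h : j = kk
    · simp [h, hP]
    · simp [h, hP, Ne.symm h]
  · simp [hP]

private lemma maps_to_of_fix {n : ℕ} (σ : Equiv.Perm (Fin n)) (t : Finset (Fin n))
    (hfix : ∀ i ∈ Finset.univ \ t, σ i = i) : ∀ a ∈ t, σ a ∈ t := by
  intro a ha
  by_contra hσa
  have h1 : σ (σ a) = σ a := hfix (σ a) (by simp [hσa])
  have h2 : σ a = a := σ.injective h1
  rw [← h2] at ha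
  exact hσa ha

private noncomputable def permRes {n k : ℕ} (σ : Equiv.Perm (Fin n)) (t : Finset (Fin n))
    (ht : t.card = k) (hmaps : ∀ a ∈ t, σ a ∈ t) : Equiv.Perm (Fin k) :=
  Equiv.ofBijective
    (fun j => (t.orderIsoOfFin ht).symm
      ⟨σ (t.orderEmbOfFin ht j), hmaps _ (Finset.orderEmbOfFin_mem t ht j)⟩)
    (Finite.injective_iff_bijective.mp (fun a b hab => by
      have h := congrArg (fun x => (((t.orderIsoOfFin ht) x : Fin n))) hab
      simp only [OrderIso.apply_symm_apply] at h
      exact (t.orderEmbOfFin ht).injective (σ.injective h)))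

private lemma permRes_spec {n k : ℕ} (σ : Equiv.Perm (Fin n)) (t : Finset (Fin n))
    (ht : t.card = k) (hmaps : ∀ a ∈ t, σ a ∈ t) (j : Fin k) :
    t.orderEmbOfFin ht (permRes σ t ht hmaps j) = σ (t.orderEmbOfFin ht j) := by
  have h2 : (t.orderIsoOfFin ht) (permRes σ t ht hmaps j)
      = ⟨σ (t.orderEmbOfFin ht j), hmaps _ (Finset.orderEmbOfFin_mem t ht j)⟩ := by
    show (t.orderIsoOfFin ht) ((t.orderIsoOfFin ht).symm _) = _
    exact OrderIso.apply_symm_apply _ _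
  have h3 := congrArg Subtype.val h2
  rw [Finset.coe_orderIsoOfFin_apply] at h3
  exact h3

private lemma permRes_unique {n k : ℕ} {β : Fin k → Fin n} (hβ : StrictMono β)
    (σ : Equiv.Perm (Fin n)) (ht : (Finset.image β Finset.univ).card = k)
    (hmaps : ∀ a ∈ Finset.image β Finset.univ, σ a ∈ Finset.image β Finset.univ)
    (τ : Equiv.Perm (Fin k)) (hcomm : ∀ j, σ (β j) = β (τ j)) :
    ⇑((Finset.image β Finset.univ).orderEmbOfFin ht) = β ∧
      permRes σ (Finset.image β Finset.univ) ht hmaps = τ := by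
  have ha : ⇑((Finset.image β Finset.univ).orderEmbOfFin ht) = β :=
    (Finset.orderEmbOfFin_unique ht
      (fun x => Finset.mem_image_of_mem β (Finset.mem_univ x)) hβ).symm
  refine ⟨ha, Equiv.ext fun j => ?_⟩
  apply hβ.injective
  have h1 := permRes_spec σ (Finset.image β Finset.univ) ht hmaps j
  rw [ha] at h1
  rw [h1]
  exact hcomm j

private lemma sign_viaEmbedding' {k n : ℕ} (τ : Equiv.Perm (Fin k)) (ι : Fin k ↪ Fin n) :
    Equiv.Perm.sign (τ.viaEmbedding ι) = Equiv.Perm.sign τ := by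
  unfold Equiv.Perm.viaEmbedding
  letI inst : DecidablePred (· ∈ Set.range ι) := fun a => Classical.propDecidable _
  exact Equiv.Perm.sign_extendDomain τ (Equiv.ofInjective ι ι.2)

/-- Coefficients of `det (1 + X • N)` are sums of principal minors. -/
private lemma coeff_det_one_add {n k : ℕ} (N : Matrix (Fin n) (Fin n) R) :
    (((1 : Matrix (Fin n) (Fin n) R[X]) + (X : R[X]) • N.map C).det).coeff k =
      ∑ β ∈ Finset.univ.filter (fun β : Fin k → Fin n => StrictMono β),
        det (N.submatrix β β) := by
  have entry : ∀ (σ : Equiv.Perm (Fin n)) (i : Fin n),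
      ((1 : Matrix (Fin n) (Fin n) R[X]) + (X : R[X]) • N.map C) (σ i) i
        = (X : R[X]) * C (N (σ i) i) + (if σ i = i then 1 else 0) := by
    intro σ i
    simp only [Matrix.add_apply, Matrix.smul_apply, Matrix.map_apply, Matrix.one_apply,
      smul_eq_mul]
    ring
  have expand : ((1 : Matrix (Fin n) (Fin n) R[X]) + (X : R[X]) • N.map C).det
      = ∑ σ : Equiv.Perm (Fin n), ∑ t ∈ (Finset.univ : Finset (Fin n)).powerset,
          (C (((Equiv.Perm.sign σ : ℤ) : R) * ∏ i ∈ t, N (σ i) i) * X ^ t.card) *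
            (if ∀ i ∈ Finset.univ \ t, σ i = i then (1 : R[X]) else 0) := by
    rw [det_apply']
    refine Finset.sum_congr rfl fun σ _ => ?_
    rw [show (∏ i, ((1 : Matrix (Fin n) (Fin n) R[X]) + (X : R[X]) • N.map C) (σ i) i)
        = ∏ i, ((X : R[X]) * C (N (σ i) i) + (if σ i = i then 1 else 0)) from
      Finset.prod_congr rfl fun i _ => entry σ i]
    rw [Finset.prod_add, Finset.mul_sum]
    refine Finset.sum_congr rfl fun t _ => ?_
    rw [Finset.prod_boole, Finset.prod_mul_distrib, Finset.prod_const, _root_.map_mul,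
      map_prod, Polynomial.C_eq_intCast]
    ring
  have lhs1 : (((1 : Matrix (Fin n) (Fin n) R[X]) + (X : R[X]) • N.map C).det).coeff k
      = ∑ σ : Equiv.Perm (Fin n), ∑ t ∈ (Finset.univ : Finset (Fin n)).powerset,
          (if t.card = k ∧ (∀ i ∈ Finset.univ \ t, σ i = i)
            then ((Equiv.Perm.sign σ : ℤ) : R) * ∏ i ∈ t, N (σ i) i else 0) := by
    rw [expand, Polynomial.finset_sum_coeff]
    refine Finset.sum_congr rfl fun σ _ => ?_
    rw [Polynomial.finset_sum_coeff]
    refine Finset.sum_congr rfl fun t _ => ?_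
    rw [coeff_helper]
  have lhs2 : (∑ p ∈ ((Finset.univ : Finset (Equiv.Perm (Fin n))) ×ˢ
        (Finset.univ : Finset (Fin n)).powerset).filter
        (fun p => p.2.card = k ∧ ∀ i ∈ Finset.univ \ p.2, p.1 i = i),
        ((Equiv.Perm.sign p.1 : ℤ) : R) * ∏ i ∈ p.2, N (p.1 i) i)
      = ∑ σ : Equiv.Perm (Fin n), ∑ t ∈ (Finset.univ : Finset (Fin n)).powerset,
          (if t.card = k ∧ (∀ i ∈ Finset.univ \ t, σ i = i)
            then ((Equiv.Perm.sign σ : ℤ) : R) * ∏ i ∈ t, N (σ i) i else 0) := by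
    rw [Finset.sum_filter, Finset.sum_product]
  have rhs1 : ∑ β ∈ Finset.univ.filter (fun β : Fin k → Fin n => StrictMono β),
        det (N.submatrix β β)
      = ∑ q ∈ (Finset.univ.filter (fun β : Fin k → Fin n => StrictMono β)) ×ˢ
          (Finset.univ : Finset (Equiv.Perm (Fin k))),
          ((Equiv.Perm.sign q.2 : ℤ) : R) * ∏ j, N (q.1 (q.2 j)) (q.1 j) := by
    rw [Finset.sum_product]
    refine Finset.sum_congr rfl fun β _ => ?_
    rw [det_apply']
    refine Finset.sum_congr rfl fun τ _ => ?_
    simp only [Matrix.submatrix_apply]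
  rw [lhs1, ← lhs2, rhs1]
  symm
  refine Finset.sum_bij'
    (i := fun (q : (Fin k → Fin n) × Equiv.Perm (Fin k))
      (hq : q ∈ (Finset.univ.filter (fun β : Fin k → Fin n => StrictMono β)) ×ˢ
        (Finset.univ : Finset (Equiv.Perm (Fin k)))) =>
      ((Equiv.Perm.viaEmbedding q.2
        ⟨q.1, ((Finset.mem_filter.mp (Finset.mem_product.mp hq).1).2).injective⟩ :
          Equiv.Perm (Fin n)),
        Finset.image q.1 Finset.univ))
    (j := fun (p : Equiv.Perm (Fin n) × Finset (Fin n))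
      (hp : p ∈ ((Finset.univ : Finset (Equiv.Perm (Fin n))) ×ˢ
        (Finset.univ : Finset (Fin n)).powerset).filter
        (fun p => p.2.card = k ∧ ∀ i ∈ Finset.univ \ p.2, p.1 i = i)) =>
      (⇑(p.2.orderEmbOfFin ((Finset.mem_filter.mp hp).2).1),
        permRes p.1 p.2 ((Finset.mem_filter.mp hp).2).1
          (maps_to_of_fix p.1 p.2 ((Finset.mem_filter.mp hp).2).2)))
    ?_ ?_ ?_ ?_ ?_
  · -- hi : lands in filtered set
    intro q hq
    have hβ : StrictMono q.1 := (Finset.mem_filter.mp (Finset.mem_product.mp hq).1).2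
    refine Finset.mem_filter.mpr ⟨Finset.mem_product.mpr
      ⟨Finset.mem_univ _, Finset.mem_powerset.mpr (Finset.subset_univ _)⟩, ?_, ?_⟩
    · exact hcard_image q.1 hβ.injective
    · intro i hi
      refine Equiv.Perm.viaEmbedding_apply_of_notMem _ _ i ?_
      intro ⟨x, hx⟩
      simp only [Finset.mem_sdiff, Finset.mem_univ, true_and] at hi
      exact hi (Finset.mem_image.mpr ⟨x, Finset.mem_univ x, hx⟩)
  · -- hj : lands in product
    intro p hp
    refine Finset.mem_product.mpr ⟨Finset.mem_filter.mpr ⟨Finset.mem_univ _, ?_⟩,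
      Finset.mem_univ _⟩
    exact (Finset.orderEmbOfFin _ _).strictMono
  · -- left_inv
    intro q hq
    have hβ := (Finset.mem_filter.mp (Finset.mem_product.mp hq).1).2
    have hcomm : ∀ j, (Equiv.Perm.viaEmbedding q.2
        (⟨q.1, hβ.injective⟩ : Fin k ↪ Fin n)) (q.1 j) = q.1 (q.2 j) := by
      intro j
      have h := Equiv.Perm.viaEmbedding_apply q.2 (⟨q.1, hβ.injective⟩ : Fin k ↪ Fin n) j
      simpa using h
    obtain ⟨h1, h2⟩ := permRes_unique hβ _ (hcard_image q.1 hβ.injective) (maps_to_of_fix _ _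
      (by
        intro i hi
        refine Equiv.Perm.viaEmbedding_apply_of_notMem _ _ i ?_
        rintro ⟨x, hx⟩
        simp only [Finset.mem_sdiff, Finset.mem_univ, true_and] at hi
        exact hi (Finset.mem_image.mpr ⟨x, Finset.mem_univ x, hx⟩))) q.2 hcomm
    exact Prod.ext h1 h2
  · -- right_inv
    intro p hp
    have ht : p.2.card = k := ((Finset.mem_filter.mp hp).2).1
    have hfix := ((Finset.mem_filter.mp hp).2).2
    have hmaps := maps_to_of_fix p.1 p.2 hfix
    have hβinj : Function.Injective ⇑(p.2.orderEmbOfFin ht) :=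
      (p.2.orderEmbOfFin ht).injective
    have himg : Finset.image ⇑(p.2.orderEmbOfFin ht) Finset.univ = p.2 := by
      ext a
      simp only [Finset.mem_image, Finset.mem_univ, true_and]
      constructor
      · rintro ⟨i, rfl⟩
        exact Finset.orderEmbOfFin_mem p.2 ht i
      · intro haa
        have h : a ∈ Set.range ⇑(p.2.orderEmbOfFin ht) := by
          rw [Finset.range_orderEmbOfFin]
          exact haa
        obtain ⟨i, hi⟩ := h
        exact ⟨i, hi⟩
    have hσ : ∀ (hinj : Function.Injective ⇑(p.2.orderEmbOfFin ht)),
        (Equiv.Perm.viaEmbedding (permRes p.1 p.2 ht hmaps)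
          (⟨⇑(p.2.orderEmbOfFin ht), hinj⟩ : Fin k ↪ Fin n)) = p.1 := by
      intro hinj
      refine Equiv.ext fun x => ?_
      by_cases hx : x ∈ Set.range ⇑(p.2.orderEmbOfFin ht)
      · obtain ⟨i, rfl⟩ := hx
        have h5 := Equiv.Perm.viaEmbedding_apply (permRes p.1 p.2 ht hmaps)
          (⟨⇑(p.2.orderEmbOfFin ht), hinj⟩ : Fin k ↪ Fin n) i
        simp only [Function.Embedding.coeFn_mk] at h5
        rw [h5]
        exact permRes_spec p.1 p.2 ht hmaps i
      · rw [Equiv.Perm.viaEmbedding_apply_of_notMem (permRes p.1 p.2 ht hmaps)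
          (⟨⇑(p.2.orderEmbOfFin ht), hinj⟩ : Fin k ↪ Fin n) x hx]
        have hxt : x ∉ p.2 := by
          intro hxt
          exact hx (by rw [Finset.range_orderEmbOfFin]; exact hxt)
        exact (hfix x (by simp [hxt])).symm
    exact Prod.ext (hσ _) himg
  · -- values agree
    intro q hq
    have hβ := (Finset.mem_filter.mp (Finset.mem_product.mp hq).1).2
    simp only
    rw [sign_viaEmbedding']
    rw [Finset.prod_image (fun x _ y _ h => hβ.injective h)]
    refine congrArg (fun z => ((Equiv.Perm.sign q.2 : ℤ) : R) * z)
      (Finset.prod_congr rfl fun x _ => ?_)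
    have h := Equiv.Perm.viaEmbedding_apply q.2 (⟨q.1, hβ.injective⟩ : Fin k ↪ Fin n) x
    simp only [Function.Embedding.coeFn_mk] at h
    rw [h]

end Aux

/-- Binet–Cauchy formula for the coefficients of `det(I + Z·(B·A))`. -/
theorem stmt10 {R : Type*} [CommRing R] {m n k : ℕ} (hk : 1 ≤ k)
    (A : Matrix (Fin m) (Fin n) R) (B : Matrix (Fin n) (Fin m) R) :
    (((1 : Matrix (Fin n) (Fin n) R[X]) + (X : R[X]) • (B * A).map C).det).coeff k =
      ∑ α ∈ Finset.univ.filter (fun α : Fin k → Fin m => StrictMono α),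
        ∑ β ∈ Finset.univ.filter (fun β : Fin k → Fin n => StrictMono β),
          (B.submatrix β α).det * (A.submatrix α β).det := by
  rw [coeff_det_one_add (B * A), Finset.sum_comm]
  refine Finset.sum_congr rfl fun β hβ => ?_
  have h1 : (B * A).submatrix β β = (B.submatrix β id) * (A.submatrix id β) :=
    Matrix.submatrix_mul B A β id β Function.bijective_id
  rw [h1, cauchy_binet]
  refine Finset.sum_congr rfl fun α _ => ?_
  simp [Matrix.submatrix_submatrix, Function.comp_id, Function.id_comp]
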